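/- For every natural number L, the sum over pairs of natural numbers (M1, M2) with M2 ≤ M1 and M1 + M2 ≤ L of ( C(L, M1)·C(M1, M2) - C(L, M1 - 1)·C(M1 - 1, M2 - 1) ) · ( L - M1 - M2 + 1 ) equals 3^L, computed in the integers, where the subtracted term is 0 whenever M1 = 0 or M2 = 0 (convention C(n, -1) = 0 and C(-1, k) = 0). -/

import Mathlib

/-- Integer-valued binomial coefficient: `C(n,k)` for integers `n`, `k`, equal to
`Nat.choose` when `0 ≤ k ≤ n` and `0` otherwise. -/
def intChoose (n k : ℤ) : ℤ := if 0 ≤ k ∧ k ≤ n then n.toNat.choose k.toNat else 0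

open Finset

lemma intChoose_coe (n k : ℕ) : intChoose n k = (n.choose k : ℤ) := by
  unfold intChoose
  split
  · simp
  · next h =>
    push_neg at h
    have hk : (n : ℤ) < k := h (by positivity)
    rw [Nat.choose_eq_zero_of_lt (by exact_mod_cast hk)]
    simp

lemma intChoose_neg (n : ℤ) : intChoose n (-1) = 0 := by
  unfold intChoose; norm_num

lemma trinom (L m1 m2 : ℕ) (h1 : m1 ≤ L) (h2 : m2 ≤ L) :
    L.choose (L - m2) * (L - m2).choose (L - m1) = L.choose m1 * m1.choose m2 := by
  rcases le_or_gt m2 m1 with h | h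
  · rw [Nat.choose_mul (n := L) (k := L - m2) (s := L - m1) (by omega)]
    have e1 : L - (L - m1) = m1 := by omega
    have e2 : (L - m2) - (L - m1) = m1 - m2 := by omega
    rw [e1, e2, Nat.choose_symm (by omega), Nat.choose_symm h]
  · have e : (L - m2).choose (L - m1) = 0 := Nat.choose_eq_zero_of_lt (by omega)
    rw [e, Nat.choose_eq_zero_of_lt h, mul_zero, mul_zero]

lemma total (L : ℕ) :
    ∑ p ∈ Finset.range (L+1) ×ˢ Finset.range (L+1), L.choose p.1 * p.1.choose p.2 = 3 ^ L := by
  rw [Finset.sum_product]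
  have inner : ∀ m1 ∈ Finset.range (L+1), ∑ m2 ∈ Finset.range (L+1), L.choose m1 * m1.choose m2
      = L.choose m1 * 2 ^ m1 := by
    intro m1 hm1
    rw [mem_range] at hm1
    rw [← Finset.mul_sum]
    congr 1
    rw [← Nat.sum_range_choose m1]
    exact (Finset.sum_subset (Finset.range_subset_range.2 (by omega))
      (fun x _ hx => Nat.choose_eq_zero_of_lt (by simp at hx ⊢; omega))).symm
  rw [Finset.sum_congr rfl inner]
  have := add_pow 2 1 L (R := ℕ)
  simp only [one_pow, mul_one] at this
  norm_num at this
  rw [this]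
  exact Finset.sum_congr rfl fun k hk => by ring

lemma invol (L : ℕ) :
    ∑ p ∈ (Finset.range (L+1) ×ˢ Finset.range (L+1)).filter (fun p => p.1 + p.2 < L),
      L.choose p.1 * p.1.choose p.2
    = ∑ p ∈ (Finset.range (L+1) ×ˢ Finset.range (L+1)).filter (fun p => L < p.1 + p.2),
      L.choose p.1 * p.1.choose p.2 := by
  apply Finset.sum_nbij' (fun p => (L - p.2, L - p.1)) (fun p => (L - p.2, L - p.1))
  · intro p hp
    simp only [mem_filter, mem_product, mem_range] at hp ⊢
    omega
  · intro p hp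
    simp only [mem_filter, mem_product, mem_range] at hp ⊢
    omega
  · intro p hp
    simp only [mem_filter, mem_product, mem_range] at hp
    simp only [Prod.ext_iff]
    omega
  · intro p hp
    simp only [mem_filter, mem_product, mem_range] at hp
    simp only [Prod.ext_iff]
    omega
  · intro p hp
    simp only [mem_filter, mem_product, mem_range] at hp
    exact (trinom L p.1 p.2 (by omega) (by omega)).symm

/-- integer version of the summand pieces -/
def fZ (L : ℕ) (p : ℕ × ℕ) : ℤ := (L.choose p.1 * p.1.choose p.2 : ℕ)
def WZ (L : ℕ) (p : ℕ × ℕ) : ℤ := (L : ℤ) - p.1 - p.2 + 1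
def GZ (L : ℕ) (p : ℕ × ℕ) : ℤ :=
  intChoose L ((p.1 : ℤ) - 1) * intChoose ((p.1 : ℤ) - 1) ((p.2 : ℤ) - 1)

/-- Completeness of the (α₁+α₂)-partially-twisted spin-1/2 su(3) chain: summing
over pairs `(M₁, M₂)` with `M₂ ≤ M₁` and `M₁ + M₂ ≤ L`,
`∑ (C(L,M₁)C(M₁,M₂) - C(L,M₁-1)C(M₁-1,M₂-1)) (L - M₁ - M₂ + 1) = 3^L`. -/
theorem su3_alpha12_completeness (L : ℕ) :
    ∑ p ∈ (Finset.range (L + 1) ×ˢ Finset.range (L + 1)).filter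
        (fun p => p.2 ≤ p.1 ∧ p.1 + p.2 ≤ L),
        (intChoose L p.1 * intChoose p.1 p.2 -
            intChoose L ((p.1 : ℤ) - 1) * intChoose ((p.1 : ℤ) - 1) ((p.2 : ℤ) - 1)) *
          ((L : ℤ) - p.1 - p.2 + 1) = 3 ^ L := by
  set sq := Finset.range (L + 1) ×ˢ Finset.range (L + 1) with hsq
  set A := sq.filter (fun p => p.2 ≤ p.1 ∧ p.1 + p.2 ≤ L) with hA
  set B := sq.filter (fun q => q.2 ≤ q.1 ∧ q.1 + q.2 + 2 ≤ L) with hB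
  set D := A.filter (fun p => p.1 + p.2 = L) with hD
  set Cle := sq.filter (fun p => p.1 + p.2 ≤ L) with hCle
  set Clt := sq.filter (fun p => p.1 + p.2 < L) with hClt
  set Cgt := sq.filter (fun p => L < p.1 + p.2) with hCgt
  set E := sq.filter (fun p => p.1 + p.2 = L) with hE
  -- Step 1: split the summand
  have e1 : ∑ p ∈ A,
      (intChoose L p.1 * intChoose p.1 p.2 -
        intChoose L ((p.1 : ℤ) - 1) * intChoose ((p.1 : ℤ) - 1) ((p.2 : ℤ) - 1)) *
        ((L : ℤ) - p.1 - p.2 + 1)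
      = ∑ p ∈ A, fZ L p * WZ L p - ∑ p ∈ A, GZ L p * WZ L p := by
    rw [← Finset.sum_sub_distrib]
    refine Finset.sum_congr rfl fun p hp => ?_
    simp only [fZ, WZ, GZ, intChoose_coe]
    push_cast
    ring
  -- Step 2: the subtracted sum is supported on p.1 ≠ 0 ∧ p.2 ≠ 0
  have e2 : ∑ p ∈ A, GZ L p * WZ L p
      = ∑ p ∈ A.filter (fun p => p.1 ≠ 0 ∧ p.2 ≠ 0), GZ L p * WZ L p := by
    refine (Finset.sum_filter_of_ne fun p hp hne => ?_).symm
    constructor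
    · rintro h1
      apply hne
      have e : ((p.1 : ℤ) - 1) = -1 := by rw [h1]; norm_num
      simp only [GZ, e, intChoose_neg, zero_mul]
    · rintro h2
      apply hne
      have e : ((p.2 : ℤ) - 1) = -1 := by rw [h2]; norm_num
      simp only [GZ, e, intChoose_neg, mul_zero, zero_mul]
  -- Step 3: reindex the subtracted sum by the shift (m1,m2) ↦ (m1+1, m2+1)
  have e3 : ∑ p ∈ A.filter (fun p => p.1 ≠ 0 ∧ p.2 ≠ 0), GZ L p * WZ L p
      = ∑ q ∈ B, fZ L q * (WZ L q - 2) := by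
    refine (Finset.sum_nbij' (i := fun q => (q.1 + 1, q.2 + 1))
      (j := fun p => (p.1 - 1, p.2 - 1)) ?_ ?_ ?_ ?_ ?_).symm
    · intro q hq
      simp only [hB, hA, mem_filter, hsq, mem_product, mem_range] at hq ⊢
      omega
    · intro p hp
      simp only [hB, hA, mem_filter, hsq, mem_product, mem_range] at hp ⊢
      omega
    · intro q hq
      simp only [Prod.ext_iff]
      omega
    · intro p hp
      simp only [hB, hA, mem_filter, hsq, mem_product, mem_range] at hp
      simp only [Prod.ext_iff]
      omega
    · intro q hq
      simp only [fZ, WZ, GZ]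
      have ea : (((q.1 + 1 : ℕ) : ℤ)) - 1 = (q.1 : ℕ) := by push_cast; ring
      have eb : (((q.2 + 1 : ℕ) : ℤ)) - 1 = (q.2 : ℕ) := by push_cast; ring
      rw [ea, eb, intChoose_coe, intChoose_coe]
      push_cast
      ring
  -- Step 4: B ⊆ A; split A into B and A \ B
  have hBA : B ⊆ A := by
    intro p hp
    simp only [hB, hA, mem_filter] at hp ⊢
    exact ⟨hp.1, hp.2.1, by omega⟩
  have hsd1 : ∑ p ∈ A \ B, fZ L p * WZ L p + ∑ p ∈ B, fZ L p * WZ L p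
      = ∑ p ∈ A, fZ L p * WZ L p := Finset.sum_sdiff hBA
  have hsd2 : ∑ p ∈ A \ B, fZ L p + ∑ p ∈ B, fZ L p = ∑ p ∈ A, fZ L p :=
    Finset.sum_sdiff hBA
  -- Step 5: on A \ B the weight is 1 or 2
  have e5 : ∑ p ∈ A \ B, (fZ L p * WZ L p - 2 * fZ L p) = - ∑ p ∈ D, fZ L p := by
    have hset : D = (A \ B).filter (fun p => p.1 + p.2 = L) := by
      ext p
      simp only [hD, hA, hB, mem_filter, mem_sdiff, hsq, mem_product, mem_range]
      constructor
      · rintro ⟨⟨hsq', h1, h2⟩, h3⟩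
        exact ⟨⟨⟨hsq', h1, h2⟩, by push_neg; intro _ _; omega⟩, h3⟩
      · rintro ⟨⟨h1, _⟩, h3⟩
        exact ⟨h1, h3⟩
    calc ∑ p ∈ A \ B, (fZ L p * WZ L p - 2 * fZ L p)
        = ∑ p ∈ A \ B, (if p.1 + p.2 = L then -fZ L p else 0) := by
          refine Finset.sum_congr rfl fun p hp => ?_
          simp only [mem_sdiff, hA, hB, mem_filter, hsq, mem_product, mem_range] at hp
          obtain ⟨⟨⟨hp1, hp2⟩, hle1, hle2⟩, hnB⟩ := hp
          have hge : L ≤ p.1 + p.2 + 1 := by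
            by_contra hcon
            exact hnB ⟨⟨hp1, hp2⟩, hle1, by omega⟩
          split
          · next heq =>
            have hw : WZ L p = 1 := by simp only [WZ]; omega
            rw [hw]; ring
          · next heq =>
            have hw : WZ L p = 2 := by simp only [WZ]; omega
            rw [hw]; ring
      _ = ∑ p ∈ (A \ B).filter (fun p => p.1 + p.2 = L), -fZ L p :=
          (Finset.sum_filter _ _).symm
      _ = - ∑ p ∈ D, fZ L p := by rw [hset, Finset.sum_neg_distrib]
  -- Step 6: replace A and D by the unconstrained index sets
  have e6 : ∑ p ∈ A, fZ L p = ∑ p ∈ Cle, fZ L p := by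
    refine Finset.sum_subset ?_ ?_
    · intro p hp
      simp only [hA, hCle, mem_filter] at hp ⊢
      exact ⟨hp.1, hp.2.2⟩
    · intro p hp hnp
      simp only [hA, hCle, mem_filter] at hp hnp
      have : p.1 < p.2 := by
        by_contra hcon
        exact hnp ⟨hp.1, by omega, hp.2⟩
      simp only [fZ, Nat.choose_eq_zero_of_lt this, mul_zero, Nat.cast_zero]
  have e7 : ∑ p ∈ D, fZ L p = ∑ p ∈ E, fZ L p := by
    refine Finset.sum_subset ?_ ?_
    · intro p hp
      simp only [hD, hA, hE, mem_filter] at hp ⊢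
      exact ⟨hp.1.1, hp.2⟩
    · intro p hp hnp
      simp only [hD, hA, hE, mem_filter] at hp hnp
      have : p.1 < p.2 := by
        by_contra hcon
        exact hnp ⟨⟨hp.1, by omega, by omega⟩, hp.2⟩
      simp only [fZ, Nat.choose_eq_zero_of_lt this, mul_zero, Nat.cast_zero]
  -- Step 7: split Cle into Clt and E
  have e8 : ∑ p ∈ Cle, fZ L p = ∑ p ∈ Clt, fZ L p + ∑ p ∈ E, fZ L p := by
    have := Finset.sum_filter_add_sum_filter_not Cle (fun p => p.1 + p.2 = L) (fZ L)
    have hfe : Cle.filter (fun p => p.1 + p.2 = L) = E := by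
      ext p
      simp only [hCle, hE, Finset.filter_filter, mem_filter]
      constructor
      · rintro ⟨h1, _, h3⟩; exact ⟨h1, h3⟩
      · rintro ⟨h1, h3⟩; exact ⟨h1, by omega, h3⟩
    have hfl : Cle.filter (fun p => ¬ p.1 + p.2 = L) = Clt := by
      ext p
      simp only [hCle, hClt, Finset.filter_filter, mem_filter]
      constructor
      · rintro ⟨h1, h2, h3⟩; exact ⟨h1, by omega⟩
      · rintro ⟨h1, h2⟩; exact ⟨h1, by omega, by omega⟩
    rw [hfe, hfl] at this
    linarith
  -- Step 8: the involution (m1,m2) ↦ (L-m2, L-m1)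
  have e9 : ∑ p ∈ Clt, fZ L p = ∑ p ∈ Cgt, fZ L p := by
    simp only [fZ, hClt, hCgt, hsq]
    exact_mod_cast invol L
  -- Step 9: total sum is 3^L
  have e10 : ∑ p ∈ Cle, fZ L p + ∑ p ∈ Cgt, fZ L p = 3 ^ L := by
    have hsplit := Finset.sum_filter_add_sum_filter_not sq (fun p => p.1 + p.2 ≤ L) (fZ L)
    have hfn : sq.filter (fun p => ¬ p.1 + p.2 ≤ L) = Cgt := by
      ext p
      simp only [hCgt, mem_filter]
      constructor
      · rintro ⟨h1, h2⟩; exact ⟨h1, by omega⟩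
      · rintro ⟨h1, h2⟩; exact ⟨h1, by omega⟩
    have htot : ∑ p ∈ sq, fZ L p = 3 ^ L := by
      simp only [fZ, hsq]
      exact_mod_cast total L
    rw [hfn, ← hCle] at hsplit
    linarith
  -- assemble everything
  have e11 : ∑ q ∈ B, fZ L q * (WZ L q - 2)
      = ∑ q ∈ B, fZ L q * WZ L q - 2 * ∑ q ∈ B, fZ L q := by
    rw [Finset.mul_sum, ← Finset.sum_sub_distrib]
    exact Finset.sum_congr rfl fun q _ => by ring
  have e12 : ∑ p ∈ A \ B, fZ L p * WZ L p
      = 2 * ∑ p ∈ A \ B, fZ L p - ∑ p ∈ D, fZ L p := by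
    have h := e5
    rw [Finset.sum_sub_distrib] at h
    rw [Finset.mul_sum]
    linarith
  rw [e1, e2, e3, e11]
  linarith [hsd1, hsd2, e12, e6, e7, e8, e9, e10]
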